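/- Let n ≥ 1 and let b₁,…,b_n, α₁,…,α_n, β₁,…,β_n be nonnegative integers with β₁ ≤ β₂ ≤ ⋯ ≤ β_n and β₁ = b₁. Then the system of inequalities 0 ≤ u_i ≤ b_i (i = 1,…,n) and α_i ≤ u₁ + ⋯ + u_i ≤ β_i (i = 1,…,n) has a solution u = (u₁,…,u_n) in nonnegative integers if and only if β_i + b_{i+1} + ⋯ + b_j ≥ α_j for every pair i, j with 1 ≤ i ≤ j ≤ n. (No monotonicity of the α_i is required.) -/
import Mathlib

/-- Greedy maximal partial sums. -/
private def Tf {n : ℕ} (b β : Fin n → ℕ) : ℕ → ℕ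
  | 0 => 0
  | k+1 => if h : k < n then min (Tf b β k + b ⟨k, h⟩) (β ⟨k, h⟩) else Tf b β k

private lemma Tf_succ_eq {n : ℕ} (b β : Fin n → ℕ) (k : ℕ) (h : k < n) :
    Tf b β (k+1) = min (Tf b β k + b ⟨k, h⟩) (β ⟨k, h⟩) := by
  have e : Tf b β (k+1)
      = if h : k < n then min (Tf b β k + b ⟨k, h⟩) (β ⟨k, h⟩) else Tf b β k := rfl
  rw [e, dif_pos h]

private lemma Tf_succ_le_beta {n : ℕ} (b β : Fin n → ℕ) (k : ℕ) (h : k < n) :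
    Tf b β (k+1) ≤ β ⟨k, h⟩ := by
  rw [Tf_succ_eq b β k h]; exact min_le_right _ _

private lemma Tf_succ_le_add {n : ℕ} (b β : Fin n → ℕ) (k : ℕ) (h : k < n) :
    Tf b β (k+1) ≤ Tf b β k + b ⟨k, h⟩ := by
  rw [Tf_succ_eq b β k h]; exact min_le_left _ _

private lemma Tf_mono {n : ℕ} (b β : Fin n → ℕ) (hβmono : Monotone β) (k : ℕ) :
    Tf b β k ≤ Tf b β (k+1) := by
  match k with
  | 0 => exact Nat.zero_le _
  | k+1 =>
    by_cases h : k + 1 < n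
    · have hk : k < n := Nat.lt_of_succ_lt h
      have h1 : Tf b β (k+1) ≤ β ⟨k, hk⟩ := Tf_succ_le_beta b β k hk
      have h2 : β ⟨k, hk⟩ ≤ β ⟨k+1, h⟩ := hβmono (by simp [Fin.le_def])
      rw [Tf_succ_eq b β (k+1) h]
      exact le_min (Nat.le_add_right _ _) (le_trans h1 h2)
    · have e : Tf b β (k+2)
          = if h : k+1 < n then min (Tf b β (k+1) + b ⟨k+1, h⟩) (β ⟨k+1, h⟩)
            else Tf b β (k+1) := rfl
      rw [e, dif_neg h]

private lemma Tf_ge {n : ℕ} (hn : 0 < n) (b β : Fin n → ℕ) (hβ1 : β ⟨0, hn⟩ = b ⟨0, hn⟩) :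
    ∀ (j : ℕ) (hj : j < n) (C : ℕ),
      (∀ i : Fin n, i ≤ ⟨j, hj⟩ → C ≤ β i + ∑ l ∈ Finset.Ioc i ⟨j, hj⟩, b l) →
      C ≤ Tf b β (j+1) := by
  intro j
  induction j with
  | zero =>
    intro hj C hC
    have h0 := hC ⟨0, hj⟩ le_rfl
    simp only [Finset.Ioc_self, Finset.sum_empty, add_zero] at h0
    rw [Tf_succ_eq b β 0 hj]
    have : β (⟨0, hn⟩ : Fin n) = β ⟨0, hj⟩ := rfl
    have : b (⟨0, hn⟩ : Fin n) = b ⟨0, hj⟩ := rfl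
    exact le_min (by omega) h0
  | succ k ih =>
    intro hj C hC
    have hk : k < n := Nat.lt_of_succ_lt hj
    have hβj : C ≤ β ⟨k+1, hj⟩ := by
      have := hC ⟨k+1, hj⟩ le_rfl
      simpa using this
    have hTb : C ≤ Tf b β (k+1) + b ⟨k+1, hj⟩ := by
      by_cases hCb : C ≤ b ⟨k+1, hj⟩
      · omega
      · have key : C - b ⟨k+1, hj⟩ ≤ Tf b β (k+1) := by
          apply ih hk
          intro i hi
          have hik : i.val ≤ k := hi
          have hij : i ≤ ⟨k+1, hj⟩ := by
            show i.val ≤ k+1; omega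
          have h1 := hC i hij
          have hsplit : Finset.Ioc i (⟨k+1, hj⟩ : Fin n)
              = insert ⟨k+1, hj⟩ (Finset.Ioc i ⟨k, hk⟩) := by
            ext x
            simp only [Finset.mem_Ioc, Finset.mem_insert, Fin.le_def, Fin.lt_def, Fin.ext_iff]
            constructor
            · rintro ⟨ha, hb2⟩
              rcases Nat.lt_or_ge x.val (k+1) with h3 | h3
              · exact Or.inr ⟨ha, by omega⟩
              · exact Or.inl (by omega)
            · rintro (hx | ⟨ha, hb2⟩)
              · omega
              · omega
          have hnotmem : (⟨k+1, hj⟩ : Fin n) ∉ Finset.Ioc i (⟨k, hk⟩ : Fin n) := by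
            simp only [Finset.mem_Ioc, Fin.le_def, Fin.val_mk, not_and]
            intro _
            omega
          rw [hsplit, Finset.sum_insert hnotmem] at h1
          omega
        omega
    rw [Tf_succ_eq b β (k+1) hj]
    exact le_min hTb hβj

private lemma Iio_fin_succ {n : ℕ} (m : ℕ) (hm : m < n) (hm1 : m + 1 < n) :
    Finset.Iio (⟨m+1, hm1⟩ : Fin n) = Finset.Iic ⟨m, hm⟩ := by
  ext x
  simp [Fin.lt_def, Fin.le_def, Nat.lt_succ_iff]

/-- The system `0 ≤ uᵢ ≤ bᵢ`, `αᵢ ≤ u₁ + ⋯ + uᵢ ≤ βᵢ` (for `i = 1,…,n`)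
with `β₁ ≤ ⋯ ≤ βₙ` and `β₁ = b₁` has a solution in nonnegative integers if and only if
`βᵢ + b_{i+1} + ⋯ + b_j ≥ α_j` for all `1 ≤ i ≤ j ≤ n`. -/
theorem plp_system_solvable_iff
    {n : ℕ} (hn : 0 < n) (b α β : Fin n → ℕ)
    (hβmono : Monotone β) (hβ1 : β ⟨0, hn⟩ = b ⟨0, hn⟩) :
    (∃ u : Fin n → ℕ, (∀ i, u i ≤ b i) ∧
      ∀ i, α i ≤ ∑ j ∈ Finset.Iic i, u j ∧ ∑ j ∈ Finset.Iic i, u j ≤ β i) ↔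
    ∀ i j : Fin n, i ≤ j → α j ≤ β i + ∑ l ∈ Finset.Ioc i j, b l := by
  constructor
  · rintro ⟨u, hub, hαβ⟩ i j hij
    have hunion : Finset.Iic i ∪ Finset.Ioc i j = Finset.Iic j := by
      ext x
      simp only [Finset.mem_union, Finset.mem_Iic, Finset.mem_Ioc]
      constructor
      · rintro (h | ⟨_, h⟩) <;> [exact le_trans h hij; exact h]
      · intro h
        rcases le_or_gt x i with h1 | h1
        · exact Or.inl h1
        · exact Or.inr ⟨h1, h⟩
    have hdisj : Disjoint (Finset.Iic i) (Finset.Ioc i j) := by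
      simp only [Finset.disjoint_left, Finset.mem_Iic, Finset.mem_Ioc]
      intro a ha ⟨h1, _⟩
      exact absurd ha (not_le.mpr h1)
    calc α j ≤ ∑ l ∈ Finset.Iic j, u l := (hαβ j).1
      _ = ∑ l ∈ Finset.Iic i, u l + ∑ l ∈ Finset.Ioc i j, u l := by
          rw [← Finset.sum_union hdisj, hunion]
      _ ≤ β i + ∑ l ∈ Finset.Ioc i j, b l :=
          add_le_add (hαβ i).2 (Finset.sum_le_sum fun l _ => hub l)
  · intro H
    refine ⟨fun i => Tf b β (i.val + 1) - Tf b β i.val, ?_, ?_⟩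
    · intro i
      have h1 : Tf b β (i.val + 1) ≤ Tf b β i.val + b i := by
        have := Tf_succ_le_add b β i.val i.isLt
        simpa using this
      show Tf b β (i.val + 1) - Tf b β i.val ≤ b i
      omega
    · intro i
      have hsum : ∀ (m : ℕ) (hm : m < n),
          ∑ j ∈ Finset.Iic (⟨m, hm⟩ : Fin n), (Tf b β (j.val + 1) - Tf b β j.val)
            = Tf b β (m + 1) := by
        intro m
        induction m with
        | zero =>
          intro hm
          have hIic : Finset.Iic (⟨0, hm⟩ : Fin n) = {⟨0, hm⟩} := by
            ext x
            simp [Fin.le_def, Nat.le_zero, Fin.ext_iff]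
          simp [hIic, Tf, hm]
        | succ k ihk =>
          intro hm
          have hk : k < n := Nat.lt_of_succ_lt hm
          have hins : Finset.Iic (⟨k+1, hm⟩ : Fin n)
              = insert ⟨k+1, hm⟩ (Finset.Iic ⟨k, hk⟩) := by
            rw [← Iio_fin_succ k hk hm, Finset.Iio_insert]
          have hnm : (⟨k+1, hm⟩ : Fin n) ∉ Finset.Iic (⟨k, hk⟩ : Fin n) := by
            simp [Fin.le_def]
          rw [hins, Finset.sum_insert hnm, ihk hk]
          have hmon := Tf_mono b β hβmono (k+1)
          simp only [Fin.val_mk]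
          omega
      have hs := hsum i.val i.isLt
      rw [Fin.eta] at hs
      rw [hs]
      constructor
      · apply Tf_ge hn b β hβ1 i.val i.isLt (α i)
        intro l hl
        have : l ≤ i := hl
        exact H l i this
      · have := Tf_succ_le_beta b β i.val i.isLt
        simpa using this
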